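/- arXiv:1807.01018 — 3 statements merged into one kernel-verified Lean document; each statement's English description precedes it below -/
import Mathlib

section
/- Let 1 < p ≤ q < ∞, 0 < α < N, and let ω, σ be positive measurable functions on ℝ^N. If the norm inequality ‖ω · I_α f‖_{L^q} ≤ C ‖f σ‖_{L^p} holds for all nonnegative f ∈ L^p(σ^p), where I_α f(x) = ∫ f(y)|x-y|^{α-N} dy, then the Muckenhoupt-type characteristic sup over cubes Q of |Q|^{α/N - (1/p - 1/q)} ( (1/|Q|) ∫_Q ω^q )^{1/q} ( (1/|Q|) ∫_Q σ^{-p/(p-1)} )^{(p-1)/p} is finite. -/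
open MeasureTheory ENNReal

private lemma cube_measurable (N : ℕ) (c : EuclideanSpace ℝ (Fin N)) (h : ℝ) :
    MeasurableSet {x : EuclideanSpace ℝ (Fin N) | ∀ i, |x i - c i| ≤ h / 2} := by
  have hcoord : ∀ i : Fin N, Measurable fun x : EuclideanSpace ℝ (Fin N) => x i := fun i =>
    (measurable_pi_apply i).comp (MeasurableEquiv.toLp 2 (Fin N → ℝ)).symm.measurable
  have : {x : EuclideanSpace ℝ (Fin N) | ∀ i, |x i - c i| ≤ h / 2}
      = ⋂ i, {x : EuclideanSpace ℝ (Fin N) | |x i - c i| ≤ h / 2} := by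
    ext x; simp
  rw [this]
  exact MeasurableSet.iInter fun i =>
    measurableSet_le (((hcoord i).sub measurable_const).abs) measurable_const

private lemma cube_volume (N : ℕ) (c : EuclideanSpace ℝ (Fin N)) (h : ℝ) (hh : 0 < h) :
    volume {x : EuclideanSpace ℝ (Fin N) | ∀ i, |x i - c i| ≤ h / 2} = ENNReal.ofReal (h ^ N) := by
  have hset : {x : EuclideanSpace ℝ (Fin N) | ∀ i, |x i - c i| ≤ h / 2}
      = (MeasurableEquiv.toLp 2 (Fin N → ℝ)).symm ⁻¹'
        (Set.univ.pi fun i => Set.Icc (c i - h / 2) (c i + h / 2)) := by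
    ext x
    simp only [Set.mem_setOf_eq, Set.mem_preimage, Set.mem_pi, Set.mem_univ, true_implies,
      Set.mem_Icc, MeasurableEquiv.coe_toLp_symm, abs_sub_le_iff, abs_le]
    constructor
    · intro hx i; have := hx i; constructor <;> linarith [this.1, this.2]
    · intro hx i; have := hx i; constructor <;> linarith [this.1, this.2]
  rw [hset, (EuclideanSpace.volume_preserving_symm_measurableEquiv_toLp (Fin N)).measure_preimage
    ((MeasurableSet.univ_pi fun i => measurableSet_Icc).nullMeasurableSet)]
  rw [volume_pi_pi]
  have : ∀ i : Fin N, volume (Set.Icc (c i - h / 2) (c i + h / 2)) = ENNReal.ofReal h := by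
    intro i; rw [Real.volume_Icc]; congr 1; ring
  rw [Finset.prod_congr rfl (fun i _ => this i), Finset.prod_const, Finset.card_univ,
    Fintype.card_fin, ← ENNReal.ofReal_pow hh.le]

private lemma cube_norm_bound (N : ℕ) (c x y : EuclideanSpace ℝ (Fin N)) (h : ℝ) (hh : 0 < h)
    (hx : ∀ i, |x i - c i| ≤ h / 2) (hy : ∀ i, |y i - c i| ≤ h / 2) :
    ‖x - y‖ ≤ Real.sqrt N * h := by
  rw [EuclideanSpace.norm_eq]
  have : Real.sqrt (∑ i, ‖(x - y) i‖ ^ 2) ≤ Real.sqrt (∑ i : Fin N, h ^ 2) := by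
    apply Real.sqrt_le_sqrt
    apply Finset.sum_le_sum
    intro i _
    have h1 : |(x - y) i| ≤ h := by
      have h2 : (x - y) i = (x i - c i) - (y i - c i) := by
        simp [PiLp.sub_apply]
      rw [h2]
      calc |(x i - c i) - (y i - c i)| ≤ |x i - c i| + |y i - c i| := abs_sub _ _
        _ ≤ h / 2 + h / 2 := add_le_add (hx i) (hy i)
        _ = h := by ring
    have h3 : ‖(x - y) i‖ ^ 2 = |(x - y) i| ^ 2 := rfl
    rw [h3]
    exact sq_le_sq' (by linarith [abs_nonneg ((x - y) i)]) h1
  refine this.trans ?_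
  rw [Finset.sum_const, Finset.card_univ, Fintype.card_fin, nsmul_eq_mul]
  rw [Real.sqrt_mul (by positivity), Real.sqrt_sq hh.le]

private lemma iSup_min_natCast (a : ℝ≥0∞) : ⨆ n : ℕ, min a (n : ℝ≥0∞) = a := by
  apply le_antisymm (iSup_le fun n => min_le_left _ _)
  by_cases ha : a = ⊤
  · subst ha
    calc (⊤ : ℝ≥0∞) = ⨆ n : ℕ, (n : ℝ≥0∞) := ENNReal.iSup_natCast.symm
      _ ≤ ⨆ n : ℕ, min ⊤ (n : ℝ≥0∞) := by simp
  · obtain ⟨n, hn⟩ := ENNReal.exists_nat_gt ha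
    calc a = min a n := (min_eq_left hn.le).symm
      _ ≤ ⨆ n : ℕ, min a (n : ℝ≥0∞) := le_iSup (fun n : ℕ => min a (n : ℝ≥0∞)) n

/-- The weighted norm inequality for the Riesz potential implies finiteness of the
two-weight Muckenhoupt characteristic over cubes. -/
theorem norm_ineq_implies_muckenhoupt
    (N : ℕ) (hN : 1 ≤ N) (p q α : ℝ)
    (hp : 1 < p) (hpq : p ≤ q) (hα : 0 < α) (hαN : α < (N : ℝ))
    (ω σ : EuclideanSpace ℝ (Fin N) → ℝ)
    (hω : Measurable ω) (hσ : Measurable σ)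
    (hωpos : ∀ x, 0 < ω x) (hσpos : ∀ x, 0 < σ x)
    (C : ℝ) (hC : 0 < C)
    (hnorm : ∀ f : EuclideanSpace ℝ (Fin N) → ℝ≥0∞, Measurable f →
      (∫⁻ x, (ENNReal.ofReal (ω x) *
          ∫⁻ y, f y * ENNReal.ofReal (‖x - y‖ ^ (α - (N : ℝ)))) ^ q) ^ (1 / q)
        ≤ ENNReal.ofReal C * (∫⁻ x, (f x * ENNReal.ofReal (σ x)) ^ p) ^ (1 / p)) :
    ∃ A : ℝ≥0∞, A ≠ ⊤ ∧
      ∀ (c : EuclideanSpace ℝ (Fin N)) (h : ℝ), 0 < h →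
        ENNReal.ofReal ((h ^ N) ^ (α / (N : ℝ) - (1 / p - 1 / q))) *
          ((ENNReal.ofReal (h ^ N))⁻¹ *
            ∫⁻ x in {x : EuclideanSpace ℝ (Fin N) | ∀ i, |x i - c i| ≤ h / 2},
              ENNReal.ofReal (ω x ^ q)) ^ (1 / q) *
          ((ENNReal.ofReal (h ^ N))⁻¹ *
            ∫⁻ x in {x : EuclideanSpace ℝ (Fin N) | ∀ i, |x i - c i| ≤ h / 2},
              ENNReal.ofReal (σ x ^ (-(p / (p - 1))))) ^ ((p - 1) / p) ≤ A := by
  have hp0 : (0:ℝ) < p := lt_trans one_pos hp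
  have hq0 : (0:ℝ) < q := lt_of_lt_of_le hp0 hpq
  have hp1 : (0:ℝ) < p - 1 := by linarith
  have hNpos : (0:ℝ) < (N:ℝ) := by exact_mod_cast hN
  have hsN : (0:ℝ) < Real.sqrt N := Real.sqrt_pos.mpr hNpos
  refine ⟨ENNReal.ofReal C * ENNReal.ofReal (Real.sqrt N ^ ((N:ℝ) - α)),
    ENNReal.mul_ne_top ENNReal.ofReal_ne_top ENNReal.ofReal_ne_top, ?_⟩
  intro c h hh
  set Q : Set (EuclideanSpace ℝ (Fin N)) := {x | ∀ i, |x i - c i| ≤ h / 2} with hQdef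
  have hQm : MeasurableSet Q := cube_measurable N c h
  have hvol : volume Q = ENNReal.ofReal (h ^ N) := cube_volume N c h hh
  have hhN : (0:ℝ) < h ^ N := pow_pos hh N
  have hVne0 : ENNReal.ofReal (h ^ N) ≠ 0 := by
    simp only [ne_eq, ENNReal.ofReal_eq_zero, not_le]; exact hhN
  have hVnetop : ENNReal.ofReal (h ^ N) ≠ ⊤ := ENNReal.ofReal_ne_top
  set g : EuclideanSpace ℝ (Fin N) → ℝ≥0∞ :=
    fun x => ENNReal.ofReal (σ x ^ (-(p / (p - 1)))) with hgdef
  have hgm : Measurable g := by fun_prop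
  set W : ℝ≥0∞ := ∫⁻ x in Q, ENNReal.ofReal (ω x ^ q) with hWdef
  set κ : ℝ≥0∞ := ENNReal.ofReal ((Real.sqrt N * h) ^ (α - (N:ℝ))) with hκdef
  set S : ℕ → ℝ≥0∞ := fun n => ∫⁻ x in Q, min (g x) n with hSdef
  -- the key estimate for truncations
  have key : ∀ n : ℕ, W ^ (1/q) * κ * (S n) ^ ((p-1)/p) ≤ ENNReal.ofReal C := by
    intro n
    set f : EuclideanSpace ℝ (Fin N) → ℝ≥0∞ := Q.indicator (fun x => min (g x) n) with hfdef
    have hfm : Measurable f := (hgm.min measurable_const).indicator hQm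
    have hmain := hnorm f hfm
    -- RHS bound
    have hRHS : (∫⁻ x, (f x * ENNReal.ofReal (σ x)) ^ p) ≤ S n := by
      have heq : ∀ x, (f x * ENNReal.ofReal (σ x)) ^ p
          = Q.indicator (fun x => (min (g x) ↑n * ENNReal.ofReal (σ x)) ^ p) x := by
        intro x
        by_cases hx : x ∈ Q
        · simp [hfdef, Set.indicator_of_mem hx]
        · simp [hfdef, Set.indicator_of_notMem hx, ENNReal.zero_rpow_of_pos hp0]
      calc (∫⁻ x, (f x * ENNReal.ofReal (σ x)) ^ p)
          = ∫⁻ x in Q, (min (g x) ↑n * ENNReal.ofReal (σ x)) ^ p := by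
            simp_rw [heq]; exact lintegral_indicator hQm _
        _ ≤ ∫⁻ x in Q, min (g x) ↑n := by
            apply lintegral_mono
            intro x
            set a := min (g x) (n : ℝ≥0∞) with hadef
            have hs0 : ENNReal.ofReal (σ x) ≠ 0 := by
              simp only [ne_eq, ENNReal.ofReal_eq_zero, not_le]; exact hσpos x
            have hstop : ENNReal.ofReal (σ x) ≠ ⊤ := ENNReal.ofReal_ne_top
            have ha_le : a ≤ ENNReal.ofReal (σ x) ^ (-(p/(p-1))) :=
              (min_le_left _ _).trans
                (le_of_eq (ENNReal.ofReal_rpow_of_pos (hσpos x)).symm)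
            calc (a * ENNReal.ofReal (σ x)) ^ p
                = a ^ p * ENNReal.ofReal (σ x) ^ p := ENNReal.mul_rpow_of_nonneg _ _ hp0.le
              _ = a * a ^ (p-1) * ENNReal.ofReal (σ x) ^ p := by
                  have hap := ENNReal.rpow_add_of_nonneg (x := a) 1 (p-1) zero_le_one hp1.le
                  rw [show (1:ℝ) + (p-1) = p by ring] at hap
                  rw [hap, ENNReal.rpow_one]
              _ ≤ a * (ENNReal.ofReal (σ x) ^ (-(p/(p-1)))) ^ (p-1) * ENNReal.ofReal (σ x) ^ p := by
                  gcongr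
              _ = a * ENNReal.ofReal (σ x) ^ (-(p/(p-1)) * (p-1)) * ENNReal.ofReal (σ x) ^ p := by
                  rw [← ENNReal.rpow_mul]
              _ = a * ENNReal.ofReal (σ x) ^ (-(p/(p-1)) * (p-1) + p) := by
                  rw [mul_assoc, ← ENNReal.rpow_add _ _ hs0 hstop]
              _ = a := by
                  have hz : -(p/(p-1)) * (p-1) + p = 0 := by
                    have hne : p - 1 ≠ 0 := hp1.ne'
                    field_simp
                    ring
                  rw [hz, ENNReal.rpow_zero, mul_one]
        _ = S n := rfl
    -- LHS bound
    have hinner : ∀ x ∈ Q, κ * S n ≤ ∫⁻ y, f y * ENNReal.ofReal (‖x - y‖ ^ (α - (N:ℝ))) := by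
      intro x hx
      have heq : (fun y => f y * ENNReal.ofReal (‖x - y‖ ^ (α - (N:ℝ))))
          = Q.indicator (fun y => min (g y) ↑n * ENNReal.ofReal (‖x - y‖ ^ (α - (N:ℝ)))) := by
        funext y
        by_cases hy : y ∈ Q
        · simp [hfdef, Set.indicator_of_mem hy]
        · simp [hfdef, Set.indicator_of_notMem hy]
      rw [heq, lintegral_indicator hQm]
      have hne : ∀ᵐ y ∂(volume : Measure (EuclideanSpace ℝ (Fin N))), y ≠ x := by
        rw [ae_iff]
        have hsing : {y : EuclideanSpace ℝ (Fin N) | ¬ y ≠ x} = {x} := by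
          ext y; simp
        rw [hsing]
        haveI : Nonempty (Fin N) := ⟨⟨0, hN⟩⟩
        haveI : Nontrivial (EuclideanSpace ℝ (Fin N)) := by
          rcases exists_pair_ne ((Fin N) → ℝ) with ⟨a, b, hab⟩
          exact ⟨WithLp.toLp 2 a, WithLp.toLp 2 b, fun h' => hab (congrArg WithLp.ofLp h')⟩
        exact measure_singleton x
      calc κ * S n = ∫⁻ y in Q, min (g y) ↑n * κ := by
            rw [lintegral_mul_const _ (hgm.min measurable_const), mul_comm]
        _ ≤ ∫⁻ y in Q, min (g y) ↑n * ENNReal.ofReal (‖x - y‖ ^ (α - (N:ℝ))) := by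
            apply setLIntegral_mono_ae' hQm
            filter_upwards [hne] with y hy hyQ
            apply mul_le_mul_right
            apply ENNReal.ofReal_le_ofReal
            have hpos : 0 < ‖x - y‖ := by
              rw [norm_sub_pos_iff]; exact fun hxy => hy hxy.symm
            exact Real.rpow_le_rpow_of_nonpos hpos
              (cube_norm_bound N c x y h hh hx hyQ) (by linarith)
    have hLHS : W ^ (1/q) * (κ * S n)
        ≤ (∫⁻ x, (ENNReal.ofReal (ω x) *
            ∫⁻ y, f y * ENNReal.ofReal (‖x - y‖ ^ (α - (N:ℝ)))) ^ q) ^ (1/q) := by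
      have houter : W * (κ * S n) ^ q
          ≤ ∫⁻ x, (ENNReal.ofReal (ω x) *
              ∫⁻ y, f y * ENNReal.ofReal (‖x - y‖ ^ (α - (N:ℝ)))) ^ q := by
        refine le_trans ?_ (setLIntegral_le_lintegral Q _)
        calc W * (κ * S n) ^ q
            = ∫⁻ x in Q, ENNReal.ofReal (ω x ^ q) * (κ * S n) ^ q := by
              rw [hWdef, lintegral_mul_const _ (by fun_prop)]
          _ ≤ ∫⁻ x in Q, (ENNReal.ofReal (ω x) *
              ∫⁻ y, f y * ENNReal.ofReal (‖x - y‖ ^ (α - (N:ℝ)))) ^ q := by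
              apply setLIntegral_mono' hQm
              intro x hx
              rw [← ENNReal.ofReal_rpow_of_pos (hωpos x),
                ← ENNReal.mul_rpow_of_nonneg _ _ hq0.le]
              exact ENNReal.rpow_le_rpow (mul_le_mul_right (hinner x hx) _) hq0.le
      calc W ^ (1/q) * (κ * S n) = (W * (κ * S n) ^ q) ^ (1/q) := by
            rw [ENNReal.mul_rpow_of_nonneg _ _ (by positivity : (0:ℝ) ≤ 1/q),
              ← ENNReal.rpow_mul, mul_one_div_cancel hq0.ne', ENNReal.rpow_one]
        _ ≤ _ := ENNReal.rpow_le_rpow houter (by positivity)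
    -- combine
    have hcomb : W ^ (1/q) * (κ * S n) ≤ ENNReal.ofReal C * (S n) ^ (1/p) :=
      hLHS.trans (hmain.trans (mul_le_mul_right
        (ENNReal.rpow_le_rpow hRHS (by positivity)) _))
    by_cases hS0 : S n = 0
    · rw [hS0, ENNReal.zero_rpow_of_pos (by positivity), mul_zero]
      exact zero_le
    have hStop : S n ≠ ⊤ := by
      have hle : S n ≤ ↑n * volume Q := by
        rw [hSdef]
        calc (∫⁻ x in Q, min (g x) ↑n) ≤ ∫⁻ _ in Q, (n : ℝ≥0∞) :=
              lintegral_mono fun x => min_le_right _ _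
          _ = ↑n * volume Q := setLIntegral_const Q n
      exact ne_top_of_le_ne_top (by rw [hvol]; finiteness) hle
    have hpow0 : (S n) ^ (1/p) ≠ 0 := by
      simp only [ne_eq, ENNReal.rpow_eq_zero_iff, not_or]
      constructor
      · rintro ⟨h1, _⟩; exact hS0 h1
      · rintro ⟨h1, _⟩; exact hStop h1
    have hpowtop : (S n) ^ (1/p) ≠ ⊤ :=
      ENNReal.rpow_ne_top_of_nonneg (by positivity) hStop
    rw [← ENNReal.mul_le_mul_iff_left hpow0 hpowtop]
    calc W ^ (1/q) * κ * (S n) ^ ((p-1)/p) * (S n) ^ (1/p)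
        = W ^ (1/q) * (κ * ((S n) ^ ((p-1)/p) * (S n) ^ (1/p))) := by ring
      _ = W ^ (1/q) * (κ * S n) := by
          rw [← ENNReal.rpow_add _ _ hS0 hStop,
            show (p-1)/p + 1/p = 1 by rw [← add_div]; field_simp; ring, ENNReal.rpow_one]
      _ ≤ ENNReal.ofReal C * (S n) ^ (1/p) := hcomb
  -- pass to the supremum
  set Sf : ℝ≥0∞ := ∫⁻ x in Q, g x with hSfdef
  have hSf : Sf = ⨆ n : ℕ, S n := by
    rw [hSfdef, hSdef]
    rw [← lintegral_iSup (fun n => hgm.min measurable_const)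
      (fun m k hmk x => min_le_min le_rfl (by exact_mod_cast Nat.cast_le.mpr hmk))]
    exact lintegral_congr fun x => (iSup_min_natCast (g x)).symm
  have hfin : W ^ (1/q) * κ * Sf ^ ((p-1)/p) ≤ ENNReal.ofReal C := by
    rw [hSf]
    have hiso : (⨆ n : ℕ, S n) ^ ((p-1)/p) = ⨆ n : ℕ, (S n) ^ ((p-1)/p) :=
      (ENNReal.orderIsoRpow ((p-1)/p) (by positivity)).map_iSup S
    rw [hiso, ENNReal.mul_iSup]
    exact iSup_le key
  -- final algebra
  set A1 : ℝ≥0∞ := ENNReal.ofReal (Real.sqrt N ^ (α - (N:ℝ))) with hA1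
  set A2 : ℝ≥0∞ := ENNReal.ofReal (h ^ (α - (N:ℝ))) with hA2
  set A3 : ℝ≥0∞ := ENNReal.ofReal (Real.sqrt N ^ ((N:ℝ) - α)) with hA3
  have hκsplit : κ = A1 * A2 := by
    rw [hκdef, hA1, hA2, ← ENNReal.ofReal_mul (by positivity),
      ← Real.mul_rpow hsN.le hh.le]
  have hone : A1 * A3 = 1 := by
    rw [hA1, hA3, ← ENNReal.ofReal_mul (by positivity),
      ← Real.rpow_add hsN, show α - (N:ℝ) + ((N:ℝ) - α) = 0 by ring, Real.rpow_zero,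
      ENNReal.ofReal_one]
  have hE : ENNReal.ofReal ((h ^ N) ^ (α / (N:ℝ) - (1/p - 1/q))) *
        ((ENNReal.ofReal (h ^ N))⁻¹ * W) ^ (1/q) *
        ((ENNReal.ofReal (h ^ N))⁻¹ * Sf) ^ ((p-1)/p)
      = A2 * (W ^ (1/q) * Sf ^ ((p-1)/p)) := by
    set V : ℝ≥0∞ := ENNReal.ofReal (h ^ N) with hV
    have h1 : ENNReal.ofReal ((h ^ N) ^ (α / (N:ℝ) - (1/p - 1/q)))
        = V ^ (α / (N:ℝ) - (1/p - 1/q)) := (ENNReal.ofReal_rpow_of_pos hhN).symm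
    have h2 : (V⁻¹ * W) ^ (1/q) = V ^ (-(1/q)) * W ^ (1/q) := by
      rw [ENNReal.mul_rpow_of_nonneg _ _ (by positivity : (0:ℝ) ≤ 1/q),
        ENNReal.inv_rpow, ← ENNReal.rpow_neg]
    have h3 : (V⁻¹ * Sf) ^ ((p-1)/p) = V ^ (-((p-1)/p)) * Sf ^ ((p-1)/p) := by
      rw [ENNReal.mul_rpow_of_nonneg _ _ (by positivity : (0:ℝ) ≤ (p-1)/p),
        ENNReal.inv_rpow, ← ENNReal.rpow_neg]
    rw [h1, h2, h3]
    have h4 : V ^ (α / (N:ℝ) - (1/p - 1/q)) * V ^ (-(1/q)) * V ^ (-((p-1)/p))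
        = V ^ (α / (N:ℝ) - 1) := by
      rw [← ENNReal.rpow_add _ _ hVne0 hVnetop, ← ENNReal.rpow_add _ _ hVne0 hVnetop]
      congr 1
      have hpne : p ≠ 0 := hp0.ne'
      have hqne : q ≠ 0 := hq0.ne'
      field_simp
      ring
    have h5 : V ^ (α / (N:ℝ) - 1) = A2 := by
      rw [hV, ENNReal.ofReal_rpow_of_pos hhN, hA2]
      congr 1
      rw [← Real.rpow_natCast h N, ← Real.rpow_mul hh.le]
      congr 1
      rw [mul_sub, mul_one, mul_div_cancel₀ _ hNpos.ne']
    calc V ^ (α / (N:ℝ) - (1/p - 1/q)) * (V ^ (-(1/q)) * W ^ (1/q)) *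
          (V ^ (-((p-1)/p)) * Sf ^ ((p-1)/p))
        = (V ^ (α / (N:ℝ) - (1/p - 1/q)) * V ^ (-(1/q)) * V ^ (-((p-1)/p))) *
          (W ^ (1/q) * Sf ^ ((p-1)/p)) := by ring
      _ = A2 * (W ^ (1/q) * Sf ^ ((p-1)/p)) := by rw [h4, h5]
  rw [hE]
  calc A2 * (W ^ (1/q) * Sf ^ ((p-1)/p))
      = (W ^ (1/q) * (A1 * A2) * Sf ^ ((p-1)/p)) * A3 := by
        rw [show (W ^ (1/q) * (A1 * A2) * Sf ^ ((p-1)/p)) * A3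
          = (A1 * A3) * (A2 * (W ^ (1/q) * Sf ^ ((p-1)/p))) by ring, hone, one_mul]
    _ ≤ ENNReal.ofReal C * A3 := by
        apply mul_le_mul_left
        rw [← hκsplit]
        exact hfin
end

section
/- Write ℝ^N = ℝ^{N_1} × ⋯ × ℝ^{N_n} with n ≥ 2, let 0 < α_i < N_i, α = α_1 + ⋯ + α_n, γ, δ ∈ ℝ, 1 < p ≤ q < ∞. Suppose the multi-parameter Muckenhoupt characteristic sup over rectangles Q = Q_1 × ⋯ × Q_n of ∏_i |Q_i|^{α_i/N_i - (1/p - 1/q)} ((1/|Q|)∫_Q |x|^{-γq} dx)^{1/q} ((1/|Q|)∫_Q |x|^{-δp/(p-1)} dx)^{(p-1)/p} is finite. Then for each i = 1, …, n, α_i/N_i ≥ 1/p - 1/q. -/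
open MeasureTheory ENNReal

set_option maxHeartbeats 1000000

lemma pm_box_eq (m : ℕ) (c : EuclideanSpace ℝ (Fin m)) (d : ℝ) :
    {y : EuclideanSpace ℝ (Fin m) | ∀ j, |y j - c j| ≤ d}
      = (MeasurableEquiv.toLp 2 (Fin m → ℝ)).symm ⁻¹'
          (Set.univ.pi fun j => Set.Icc (c j - d) (c j + d)) := by
  ext y
  simp only [Set.mem_setOf_eq, Set.mem_preimage, Set.mem_pi, Set.mem_univ, true_implies,
    Set.mem_Icc, MeasurableEquiv.coe_toLp_symm]
  refine forall_congr' fun j => ?_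
  rw [abs_le]
  constructor <;> intro hh <;> constructor <;> simp at hh ⊢ <;> linarith [hh.1, hh.2]

lemma pm_box_measurable (m : ℕ) (c : EuclideanSpace ℝ (Fin m)) (d : ℝ) :
    MeasurableSet {y : EuclideanSpace ℝ (Fin m) | ∀ j, |y j - c j| ≤ d} := by
  rw [pm_box_eq]
  exact (MeasurableEquiv.toLp 2 (Fin m → ℝ)).symm.measurable
    (MeasurableSet.univ_pi fun j => measurableSet_Icc)

lemma pm_box_volume (m : ℕ) (c : EuclideanSpace ℝ (Fin m)) (d : ℝ) (hd : 0 ≤ d) :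
    volume {y : EuclideanSpace ℝ (Fin m) | ∀ j, |y j - c j| ≤ d}
      = ENNReal.ofReal ((2 * d) ^ m) := by
  rw [pm_box_eq,
    (EuclideanSpace.volume_preserving_symm_measurableEquiv_toLp (Fin m)).measure_preimage
      ((MeasurableSet.univ_pi fun j => measurableSet_Icc).nullMeasurableSet),
    volume_pi_pi]
  have : ∀ j : Fin m, volume (Set.Icc (c j - d) (c j + d)) = ENNReal.ofReal (2 * d) := by
    intro j; rw [Real.volume_Icc]; ring_nf
  simp only [this, Finset.prod_const, Finset.card_univ, Fintype.card_fin]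
  rw [← ENNReal.ofReal_pow (by linarith)]

lemma pm_rpow_lower (R s r : ℝ) (h1 : 1 ≤ r) (hrR : r ≤ R) : min 1 (R ^ s) ≤ r ^ s := by
  rcases le_or_gt 0 s with hs | hs
  · calc min 1 (R ^ s) ≤ 1 := min_le_left _ _
      _ = (1 : ℝ) ^ s := (Real.one_rpow s).symm
      _ ≤ r ^ s := Real.rpow_le_rpow zero_le_one h1 hs
  · exact le_trans (min_le_right _ _)
      (Real.rpow_le_rpow_of_nonpos (lt_of_lt_of_le one_pos h1) hrR hs.le)

/-- Finiteness of the multi-parameter Muckenhoupt characteristic for power weights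
implies `α_i/N_i ≥ 1/p - 1/q` for every factor. -/
theorem product_muckenhoupt_implies_subbalance
    (n : ℕ) (hn : 2 ≤ n) (N : Fin n → ℕ) (hN : ∀ i, 1 ≤ N i)
    (α : Fin n → ℝ) (hα : ∀ i, 0 < α i) (hαN : ∀ i, α i < (N i : ℝ))
    (p q γ δ : ℝ) (hp : 1 < p) (hpq : p ≤ q)
    (A : ℝ≥0∞) (hA : A ≠ ⊤)
    (hchar : ∀ (c : ∀ i, EuclideanSpace ℝ (Fin (N i))) (h : Fin n → ℝ),
      (∀ i, 0 < h i) →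
      (∏ i, ENNReal.ofReal ((h i ^ N i) ^ (α i / (N i : ℝ) - (1 / p - 1 / q)))) *
        ((ENNReal.ofReal (∏ i, h i ^ N i))⁻¹ *
          ∫⁻ x in {x : ∀ i, EuclideanSpace ℝ (Fin (N i)) |
              ∀ i j, |x i j - c i j| ≤ h i / 2},
            ENNReal.ofReal ((Real.sqrt (∑ i, ‖x i‖ ^ 2)) ^ (-(γ * q)))) ^ (1 / q) *
        ((ENNReal.ofReal (∏ i, h i ^ N i))⁻¹ *
          ∫⁻ x in {x : ∀ i, EuclideanSpace ℝ (Fin (N i)) |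
              ∀ i j, |x i j - c i j| ≤ h i / 2},
            ENNReal.ofReal ((Real.sqrt (∑ i, ‖x i‖ ^ 2)) ^
              (-(δ * (p / (p - 1)))))) ^ ((p - 1) / p) ≤ A) :
    ∀ i, α i / (N i : ℝ) ≥ 1 / p - 1 / q := by
  intro i₀
  by_contra hlt
  push_neg at hlt
  have hq : 1 < q := lt_of_lt_of_le hp hpq
  have hp0 : 0 < p := by linarith
  have hq0 : 0 < q := by linarith
  have hp1 : 0 < p - 1 := by linarith
  have hNi0 : (0:ℝ) < (N i₀ : ℝ) := by exact_mod_cast (hN i₀)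
  have heneg : α i₀ / (N i₀ : ℝ) - (1 / p - 1 / q) < 0 := by linarith
  have hNeneg : (N i₀ : ℝ) * (α i₀ / (N i₀ : ℝ) - (1 / p - 1 / q)) < 0 :=
    mul_neg_of_pos_of_neg hNi0 heneg
  set M : ℝ := ∑ i, (N i : ℝ) with hM
  have hM1 : 1 ≤ M := by
    have h2 : (n : ℝ) ≤ M := by
      rw [hM]
      calc (n : ℝ) = ∑ _i : Fin n, (1 : ℝ) := by simp
        _ ≤ _ := Finset.sum_le_sum fun i _ => by exact_mod_cast hN i
    have h3 : (2 : ℝ) ≤ (n : ℝ) := by exact_mod_cast hn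
    linarith
  set R : ℝ := 4 * M with hRdef
  have hR0 : 0 < R := by rw [hRdef]; linarith
  set m₁ : ℝ := min 1 (R ^ (-(γ * q))) with hm₁
  set m₂ : ℝ := min 1 (R ^ (-(δ * (p / (p - 1))))) with hm₂
  have hm₁0 : 0 < m₁ := lt_min one_pos (Real.rpow_pos_of_pos hR0 _)
  have hm₂0 : 0 < m₂ := lt_min one_pos (Real.rpow_pos_of_pos hR0 _)
  set K : ℝ := m₁ ^ (1 / q) * m₂ ^ ((p - 1) / p) with hK
  have hK0 : 0 < K := mul_pos (Real.rpow_pos_of_pos hm₁0 _) (Real.rpow_pos_of_pos hm₂0 _)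
  set B : ℝ := max (A.toReal / K) 0 + 1 with hB
  have hB1 : 1 ≤ B := by
    have := le_max_right (A.toReal / K) 0
    rw [hB]; linarith
  set t : ℝ := B ^ (1 / ((N i₀ : ℝ) * (α i₀ / (N i₀ : ℝ) - (1 / p - 1 / q)))) with htdef
  have ht0 : 0 < t := Real.rpow_pos_of_pos (by linarith) _
  have ht1 : t ≤ 1 := Real.rpow_le_one_of_one_le_of_nonpos hB1
    (by exact le_of_lt (div_neg_of_pos_of_neg one_pos hNeneg))
  have htNe : t ^ ((N i₀ : ℝ) * (α i₀ / (N i₀ : ℝ) - (1 / p - 1 / q))) = B := by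
    rw [htdef, ← Real.rpow_mul (by linarith : (0:ℝ) ≤ B), one_div,
      inv_mul_cancel₀ hNeneg.ne, Real.rpow_one]
  set h : Fin n → ℝ := fun i => if i = i₀ then t else 1 with hdef
  have hpos : ∀ i, 0 < h i := fun i => by
    by_cases hi : i = i₀ <;> simp [hdef, hi, ht0]
  have hle1 : ∀ i, h i ≤ 1 := fun i => by
    by_cases hi : i = i₀ <;> simp [hdef, hi, ht1]
  set c : ∀ i, EuclideanSpace ℝ (Fin (N i)) := fun i => WithLp.toLp 2 (fun _ => (3:ℝ)) with hc
  have key := hchar c h hpos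
  set S : Set (∀ i, EuclideanSpace ℝ (Fin (N i))) :=
    {x | ∀ i j, |x i j - c i j| ≤ h i / 2} with hS
  have hSpi : S = Set.univ.pi
      (fun i => {y : EuclideanSpace ℝ (Fin (N i)) | ∀ j, |y j - c i j| ≤ h i / 2}) := by
    ext x
    simp [hS, Set.mem_pi]
  have hSmeas : MeasurableSet S := by
    rw [hSpi]
    exact MeasurableSet.univ_pi fun i => pm_box_measurable _ _ _
  have hprodpos : 0 < ∏ i, h i ^ N i := Finset.prod_pos fun i _ => pow_pos (hpos i) _
  set v : ℝ≥0∞ := ENNReal.ofReal (∏ i, h i ^ N i) with hvdef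
  have hv0 : v ≠ 0 := (ENNReal.ofReal_pos.mpr hprodpos).ne'
  have hvtop : v ≠ ⊤ := ENNReal.ofReal_ne_top
  have hvol : volume S = v := by
    rw [hSpi, volume_pi_pi, hvdef,
      ENNReal.ofReal_prod_of_nonneg (fun i _ => by positivity)]
    refine Finset.prod_congr rfl fun i _ => ?_
    rw [pm_box_volume _ _ _ (by positivity)]
    congr 1
    ring
  -- radius bounds on S
  have hrad : ∀ x ∈ S, 1 ≤ Real.sqrt (∑ i, ‖x i‖ ^ 2) ∧
      Real.sqrt (∑ i, ‖x i‖ ^ 2) ≤ R := by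
    intro x hx
    simp only [hS, Set.mem_setOf_eq] at hx
    have hxmem : ∀ i j, |x i j - c i j| ≤ h i / 2 := hx
    have hxb : ∀ i j, 1 ≤ (x i j) ^ 2 ∧ (x i j) ^ 2 ≤ 16 := by
      intro i j
      have h1 := hxmem i j
      have hc3 : c i j = 3 := rfl
      rw [hc3, abs_le] at h1
      have hhalf : h i / 2 ≤ 1 / 2 := by linarith [hle1 i]
      have hhpos : 0 < h i / 2 := by linarith [hpos i]
      constructor <;> nlinarith [h1.1, h1.2]
    have hni : ∀ i, ‖x i‖ ^ 2 = ∑ j, (x i j) ^ 2 := by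
      intro i
      rw [EuclideanSpace.norm_eq,
        Real.sq_sqrt (Finset.sum_nonneg fun j _ => by positivity)]
      simp [Real.norm_eq_abs, sq_abs]
    have hsum_lo : M ≤ ∑ i, ‖x i‖ ^ 2 := by
      rw [hM]
      refine Finset.sum_le_sum fun i _ => ?_
      rw [hni i]
      calc (N i : ℝ) = ∑ _j : Fin (N i), (1 : ℝ) := by simp
        _ ≤ _ := Finset.sum_le_sum fun j _ => (hxb i j).1
    have hsum_hi : ∑ i, ‖x i‖ ^ 2 ≤ 16 * M := by
      rw [hM, Finset.mul_sum]
      refine Finset.sum_le_sum fun i _ => ?_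
      rw [hni i]
      calc ∑ j, (x i j) ^ 2 ≤ ∑ _j : Fin (N i), (16 : ℝ) :=
            Finset.sum_le_sum fun j _ => (hxb i j).2
        _ = 16 * (N i : ℝ) := by simp [mul_comm]
    constructor
    · rw [show (1:ℝ) = Real.sqrt 1 from Real.sqrt_one.symm]
      exact Real.sqrt_le_sqrt (by linarith)
    · calc Real.sqrt (∑ i, ‖x i‖ ^ 2) ≤ Real.sqrt ((4 * M) ^ 2) :=
            Real.sqrt_le_sqrt (by nlinarith)
        _ = 4 * M := Real.sqrt_sq (by linarith)
  -- lower bound for the averaged integrals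
  have hint : ∀ s : ℝ, ENNReal.ofReal (min 1 (R ^ s)) ≤
      v⁻¹ * ∫⁻ x in S, ENNReal.ofReal ((Real.sqrt (∑ i, ‖x i‖ ^ 2)) ^ s) := by
    intro s
    have hmono : ∫⁻ _x in S, ENNReal.ofReal (min 1 (R ^ s)) ≤
        ∫⁻ x in S, ENNReal.ofReal ((Real.sqrt (∑ i, ‖x i‖ ^ 2)) ^ s) :=
      setLIntegral_mono' hSmeas fun x hx =>
        ENNReal.ofReal_le_ofReal (pm_rpow_lower R s _ (hrad x hx).1 (hrad x hx).2)
    rw [setLIntegral_const, hvol] at hmono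
    calc ENNReal.ofReal (min 1 (R ^ s))
        = v⁻¹ * (ENNReal.ofReal (min 1 (R ^ s)) * v) := by
          rw [mul_comm (ENNReal.ofReal _) v, ← mul_assoc,
            ENNReal.inv_mul_cancel hv0 hvtop, one_mul]
      _ ≤ _ := mul_le_mul_right hmono _
  -- value of the first factor
  have hprod_eval : (∏ i, ENNReal.ofReal ((h i ^ N i) ^ (α i / (N i : ℝ) - (1 / p - 1 / q))))
      = ENNReal.ofReal B := by
    rw [Finset.prod_eq_single i₀ ?_ ?_]
    · have hh : h i₀ = t := by simp [hdef]
      rw [hh]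
      congr 1
      rw [← Real.rpow_natCast t (N i₀), ← Real.rpow_mul ht0.le, htNe]
    · intro i _ hi
      simp [hdef, hi]
    · simp
  rw [hprod_eval] at key
  have h1 : ENNReal.ofReal (m₁ ^ (1 / q)) ≤
      (v⁻¹ * ∫⁻ x in S, ENNReal.ofReal ((Real.sqrt (∑ i, ‖x i‖ ^ 2)) ^ (-(γ * q)))) ^ (1 / q) := by
    rw [← ENNReal.ofReal_rpow_of_pos hm₁0]
    exact ENNReal.rpow_le_rpow (hint _) (by positivity)
  have h2 : ENNReal.ofReal (m₂ ^ ((p - 1) / p)) ≤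
      (v⁻¹ * ∫⁻ x in S, ENNReal.ofReal ((Real.sqrt (∑ i, ‖x i‖ ^ 2)) ^
        (-(δ * (p / (p - 1)))))) ^ ((p - 1) / p) := by
    rw [← ENNReal.ofReal_rpow_of_pos hm₂0]
    exact ENNReal.rpow_le_rpow (hint _) (by positivity)
  have hcomb : ENNReal.ofReal B * ENNReal.ofReal (m₁ ^ (1 / q)) *
      ENNReal.ofReal (m₂ ^ ((p - 1) / p)) ≤ A :=
    le_trans (mul_le_mul' (mul_le_mul' le_rfl h1) h2) key
  rw [← ENNReal.ofReal_mul (by linarith), ← ENNReal.ofReal_mul (by positivity)] at hcomb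
  have hBK : B * m₁ ^ (1 / q) * m₂ ^ ((p - 1) / p) ≤ A.toReal :=
    (ENNReal.ofReal_le_iff_le_toReal hA).mp hcomb
  have hBK' : B * K ≤ A.toReal := by rw [hK]; linarith [hBK]
  have hlt2 : A.toReal / K < B := by
    have := le_max_left (A.toReal / K) 0
    rw [hB]; linarith
  have : A.toReal < B * K := (div_lt_iff₀ hK0).mp hlt2
  linarith
end

section
/- Write ℝ^N = ℝ^{N_1} × ⋯ × ℝ^{N_n}, and suppose α_i/N_i = 1/p - 1/q for all i with 1 < p < q < ∞. Let ω be a weight on ℝ^N such that for each i and almost every x_i† ∈ ℝ^{N - N_i}, the one-parameter weighted inequality ‖(f ∗ |x_i|^{α_i - N_i}) ω(·, x_i†)‖_{L^q(ℝ^{N_i})} ≤ C ‖f ω(·, x_i†)‖_{L^p(ℝ^{N_i})} holds with a uniform constant C. Then the strong fractional integral operator I_α f(x) = ∫ f(y) ∏_i |x_i - y_i|^{α_i - N_i} dy satisfies ‖ω I_α f‖_{L^q(ℝ^N)} ≤ C' ‖f ω‖_{L^p(ℝ^N)} for nonnegative f, where C' depends on C, p, q, n, N. -/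
open MeasureTheory ENNReal
open Function in
section
open Function

namespace OneWeightAux


lemma iSup_min_natCast (x : ℝ≥0∞) : ⨆ k : ℕ, min x (k : ℝ≥0∞) = x := by
  refine le_antisymm (iSup_le fun k => min_le_left _ _) ?_
  rcases eq_or_ne x ∞ with rfl | hx
  · calc (∞ : ℝ≥0∞) = ⨆ k : ℕ, (k : ℝ≥0∞) := ENNReal.iSup_natCast.symm
      _ ≤ ⨆ k : ℕ, min ∞ (k : ℝ≥0∞) := iSup_mono fun k => by simp
  · obtain ⟨k, hk⟩ := ENNReal.exists_nat_gt hx.lt_top.ne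
    calc x = min x (k : ℝ≥0∞) := (min_eq_left hk.le).symm
      _ ≤ ⨆ k : ℕ, min x (k : ℝ≥0∞) := le_iSup (fun k : ℕ => min x (k : ℝ≥0∞)) k

lemma iSup_rpow_of_monotone (u : ℕ → ℝ≥0∞) {r : ℝ} (hr : 0 < r) :
    (⨆ n, u n) ^ r = ⨆ n, (u n) ^ r := by
  have h2 : (⨆ n, (u n) ^ r) ≤ (⨆ n, u n) ^ r :=
    iSup_le fun n => ENNReal.rpow_le_rpow (le_iSup u n) hr.le
  refine le_antisymm ?_ h2
  have h1 : (⨆ n, u n) ≤ (⨆ n, (u n) ^ r) ^ (1 / r) := by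
    refine iSup_le fun n => ?_
    have e : u n = ((u n) ^ r) ^ (1 / r) := by
      rw [← ENNReal.rpow_mul, mul_one_div_cancel hr.ne', ENNReal.rpow_one]
    rw [e]
    exact ENNReal.rpow_le_rpow (le_iSup (fun n => (u n) ^ r) n) (by positivity)
  calc (⨆ n, u n) ^ r ≤ ((⨆ n, (u n) ^ r) ^ (1 / r)) ^ r :=
        ENNReal.rpow_le_rpow h1 hr.le
    _ = ⨆ n, (u n) ^ r := by
        rw [← ENNReal.rpow_mul, one_div_mul_cancel hr.ne', ENNReal.rpow_one]

theorem lintegral_lintegral_rpow_le_aux {A B : Type*} [MeasurableSpace A] [MeasurableSpace B]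
    (μ : Measure A) (ν : Measure B) [SigmaFinite μ] [SigmaFinite ν]
    {F : A → B → ℝ≥0∞} (hF : Measurable (Function.uncurry F)) {r : ℝ} (hr : 1 < r)
    (hfin : (∫⁻ a, (∫⁻ b, F a b ∂ν) ^ r ∂μ) ≠ ∞) :
    (∫⁻ a, (∫⁻ b, F a b ∂ν) ^ r ∂μ) ^ (1/r) ≤ ∫⁻ b, (∫⁻ a, (F a b) ^ r ∂μ) ^ (1/r) ∂ν := by
  have hr0 : (0:ℝ) < r := lt_trans one_pos hr
  set G : A → ℝ≥0∞ := fun a => ∫⁻ b, F a b ∂ν with hG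
  have hGm : Measurable G := hF.lintegral_prod_right'
  set M : ℝ≥0∞ := ∫⁻ a, G a ^ r ∂μ with hM
  rcases eq_or_ne M 0 with hM0 | hM0
  · rw [hM0, ENNReal.zero_rpow_of_pos (by positivity)]; exact zero_le
  have hc : r.HolderConjugate (r / (r - 1)) := Real.HolderConjugate.conjExponent hr
  have hr1 : (0:ℝ) < r - 1 := by linarith
  set RHSf : B → ℝ≥0∞ := fun b => (∫⁻ a, (F a b) ^ r ∂μ) ^ (1/r) with hRHSf
  have hRHSm : Measurable RHSf := by
    have h0 : Measurable fun p : A × B => (F p.1 p.2) ^ r := hF.pow measurable_const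
    exact h0.lintegral_prod_left'.pow measurable_const
  have hpow : ∀ a, G a ^ r = G a * G a ^ (r - 1) := by
    intro a
    rcases eq_or_ne (G a) 0 with h0 | h0
    · rw [h0, ENNReal.zero_rpow_of_pos hr0, ENNReal.zero_rpow_of_pos hr1, mul_zero]
    rcases eq_or_ne (G a) ∞ with htop | htop
    · rw [htop, ENNReal.top_rpow_of_pos hr0, ENNReal.top_rpow_of_pos hr1, ENNReal.top_mul_top]
    · have e : G a ^ r = G a ^ (1 + (r - 1)) := by norm_num
      rw [e, ENNReal.rpow_add _ _ h0 htop, ENNReal.rpow_one]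
  have h1 : M = ∫⁻ b, ∫⁻ a, F a b * G a ^ (r - 1) ∂μ ∂ν := by
    rw [hM]
    simp_rw [hpow]
    have e : ∀ a, G a * G a ^ (r-1) = ∫⁻ b, F a b * G a ^ (r-1) ∂ν := by
      intro a
      rw [hG]
      exact (lintegral_mul_const'' _ (hF.of_uncurry_left).aemeasurable).symm
    simp_rw [e]
    rw [lintegral_lintegral_swap]
    exact (hF.mul ((hGm.comp measurable_fst).pow measurable_const)).aemeasurable
  have h2 : ∀ b, (∫⁻ a, F a b * G a ^ (r - 1) ∂μ) ≤ RHSf b * M ^ (1 - 1/r) := by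
    intro b
    have hfm : Measurable fun a => F a b := hF.of_uncurry_right
    have hgm : Measurable fun a => G a ^ (r - 1) := hGm.pow measurable_const
    have hold := ENNReal.lintegral_mul_le_Lp_mul_Lq μ hc hfm.aemeasurable hgm.aemeasurable
    refine le_trans hold ?_
    have e1 : (∫⁻ a, ((fun a => G a ^ (r-1)) a) ^ (r / (r-1)) ∂μ) = M := by
      rw [hM]
      congr 1
      funext a
      rw [← ENNReal.rpow_mul]
      congr 1
      field_simp
    rw [e1]
    apply mul_le_mul' (le_refl _)
    apply le_of_eq
    congr 1
    rw [one_div, inv_div, sub_div, div_self hr0.ne', one_div]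
  have key : M ≤ (∫⁻ b, RHSf b ∂ν) * M ^ (1 - 1/r) := by
    calc M = ∫⁻ b, ∫⁻ a, F a b * G a ^ (r - 1) ∂μ ∂ν := h1
      _ ≤ ∫⁻ b, RHSf b * M ^ (1 - 1/r) ∂ν := lintegral_mono h2
      _ = (∫⁻ b, RHSf b ∂ν) * M ^ (1 - 1/r) := lintegral_mul_const'' _ hRHSm.aemeasurable
  have hMpos : 0 < M := pos_iff_ne_zero.mpr hM0
  have hc0 : M ^ (1 - 1/r) ≠ 0 := (ENNReal.rpow_pos hMpos hfin).ne'
  have hctop : M ^ (1 - 1/r) ≠ ∞ := ENNReal.rpow_ne_top_of_nonneg (by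
      have : 1/r < 1 := by rw [div_lt_one hr0]; exact hr
      linarith) hfin
  have hsplit : M = M ^ (1/r) * M ^ (1 - 1/r) := by
    rw [← ENNReal.rpow_add _ _ hM0 hfin]
    norm_num
  have key2 : M ^ (1/r) * M ^ (1 - 1/r) ≤ (∫⁻ b, RHSf b ∂ν) * M ^ (1 - 1/r) := by
    rw [← hsplit]; exact key
  exact (ENNReal.mul_le_mul_iff_left hc0 hctop).mp key2


/-- **Minkowski's integral inequality** for `ℝ≥0∞`-valued functions. -/
theorem lintegral_lintegral_rpow_le {A B : Type*} [MeasurableSpace A] [MeasurableSpace B]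
    (μ : Measure A) (ν : Measure B) [SigmaFinite μ] [SigmaFinite ν]
    {F : A → B → ℝ≥0∞} (hF : Measurable (Function.uncurry F)) {r : ℝ} (hr : 1 < r) :
    (∫⁻ a, (∫⁻ b, F a b ∂ν) ^ r ∂μ) ^ (1/r) ≤ ∫⁻ b, (∫⁻ a, (F a b) ^ r ∂μ) ^ (1/r) ∂ν := by
  have hr0 : (0:ℝ) < r := by linarith
  set RHS := ∫⁻ b, (∫⁻ a, (F a b) ^ r ∂μ) ^ (1/r) ∂ν with hRHS
  suffices h : (∫⁻ a, (∫⁻ b, F a b ∂ν) ^ r ∂μ) ≤ RHS ^ r by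
    calc (∫⁻ a, (∫⁻ b, F a b ∂ν) ^ r ∂μ) ^ (1/r) ≤ (RHS ^ r) ^ (1/r) :=
          ENNReal.rpow_le_rpow h (by positivity)
      _ = RHS := by rw [← ENNReal.rpow_mul, mul_one_div_cancel hr0.ne', ENNReal.rpow_one]
  classical
  set Fn : ℕ → A → B → ℝ≥0∞ := fun n a b =>
    min (F a b) n * (spanningSets μ n).indicator 1 a * (spanningSets ν n).indicator 1 b with hFn
  have hindA : ∀ (s : Set A) (c : A), s.indicator (1 : A → ℝ≥0∞) c ≤ 1 := by
    intro s c
    by_cases h : c ∈ s <;> simp [h]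
  have hindB : ∀ (s : Set B) (c : B), s.indicator (1 : B → ℝ≥0∞) c ≤ 1 := by
    intro s c
    by_cases h : c ∈ s <;> simp [h]
  have hFnm : ∀ n, Measurable (Function.uncurry (Fn n)) := by
    intro n
    apply Measurable.mul
    apply Measurable.mul
    · exact (hF.min measurable_const)
    · exact ((measurable_one.indicator (measurableSet_spanningSets μ n)).comp measurable_fst)
    · exact ((measurable_one.indicator (measurableSet_spanningSets ν n)).comp measurable_snd)
  have hFn_le : ∀ n a b, Fn n a b ≤ F a b := by
    intro n a b
    calc Fn n a b ≤ min (F a b) (n:ℝ≥0∞) * 1 * 1 :=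
          mul_le_mul' (mul_le_mul' le_rfl (hindA _ _)) (hindB _ _)
      _ ≤ F a b := by simpa using min_le_left _ _
  have hFn_mono : ∀ a b, Monotone fun n => Fn n a b := by
    intro a b m k hmk
    refine mul_le_mul' (mul_le_mul' (min_le_min le_rfl (by exact_mod_cast hmk)) ?_) ?_
    · exact Set.indicator_le_indicator_of_subset (monotone_spanningSets μ hmk) (fun _ => zero_le) _
    · exact Set.indicator_le_indicator_of_subset (monotone_spanningSets ν hmk) (fun _ => zero_le) _
  have hFn_sup : ∀ a b, (⨆ n, Fn n a b) = F a b := by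
    intro a b
    refine le_antisymm (iSup_le fun n => hFn_le n a b) ?_
    obtain ⟨na, hna⟩ : ∃ na, a ∈ spanningSets μ na := by
      have := iUnion_spanningSets μ
      have ha : a ∈ ⋃ n, spanningSets μ n := by rw [this]; trivial
      exact Set.mem_iUnion.mp ha
    obtain ⟨nb, hnb⟩ : ∃ nb, b ∈ spanningSets ν nb := by
      have := iUnion_spanningSets ν
      have hb : b ∈ ⋃ n, spanningSets ν n := by rw [this]; trivial
      exact Set.mem_iUnion.mp hb
    have step : ∀ k : ℕ, min (F a b) k ≤ ⨆ n, Fn n a b := by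
      intro k
      have hm : k ≤ max k (max na nb) := le_max_left _ _
      have h1 : a ∈ spanningSets μ (max k (max na nb)) :=
        monotone_spanningSets μ (le_trans (le_max_left na nb) (le_max_right _ _)) hna
      have h2 : b ∈ spanningSets ν (max k (max na nb)) :=
        monotone_spanningSets ν (le_trans (le_max_right na nb) (le_max_right _ _)) hnb
      calc min (F a b) (k:ℝ≥0∞) ≤ min (F a b) ((max k (max na nb) : ℕ) : ℝ≥0∞) :=
            min_le_min le_rfl (by exact_mod_cast hm)
        _ = Fn (max k (max na nb)) a b := by rw [hFn]; simp [h1, h2]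
        _ ≤ ⨆ n, Fn n a b := le_iSup (fun n => Fn n a b) _
    calc F a b = ⨆ k : ℕ, min (F a b) (k:ℝ≥0∞) := (iSup_min_natCast _).symm
      _ ≤ ⨆ n, Fn n a b := iSup_le step
  set Gn : ℕ → A → ℝ≥0∞ := fun n a => ∫⁻ b, Fn n a b ∂ν with hGn
  have hGnm : ∀ n, Measurable (Gn n) := fun n => (hFnm n).lintegral_prod_right'
  have hGn_mono : Monotone Gn := fun m k hmk a => lintegral_mono fun b => hFn_mono a b hmk
  have hGn_sup : ∀ a, (⨆ n, Gn n a) = ∫⁻ b, F a b ∂ν := by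
    intro a
    rw [hGn]
    dsimp only
    rw [← lintegral_iSup (fun n => (hFnm n).of_uncurry_left) (fun m k hmk b => hFn_mono a b hmk)]
    congr 1
    funext b
    exact hFn_sup a b
  set Mn : ℕ → ℝ≥0∞ := fun n => ∫⁻ a, (Gn n a) ^ r ∂μ with hMn
  have hM_sup : (∫⁻ a, (∫⁻ b, F a b ∂ν) ^ r ∂μ) = ⨆ n, Mn n := by
    rw [← lintegral_iSup (fun n => (hGnm n).pow measurable_const)
      (fun m k hmk a => ENNReal.rpow_le_rpow (hGn_mono hmk a) hr0.le)]
    congr 1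
    funext a
    rw [← iSup_rpow_of_monotone _ hr0, hGn_sup a]
  have hMn_fin : ∀ n, Mn n ≠ ∞ := by
    intro n
    have hc : ((n:ℝ≥0∞) * ν (spanningSets ν n)) ^ r ≠ ∞ := by
      apply ENNReal.rpow_ne_top_of_nonneg hr0.le
      exact ENNReal.mul_ne_top (ENNReal.natCast_ne_top n) (measure_spanningSets_lt_top ν n).ne
    have hb : ∀ a, (Gn n a) ^ r ≤
        (spanningSets μ n).indicator 1 a * ((n:ℝ≥0∞) * ν (spanningSets ν n)) ^ r := by
      intro a
      by_cases ha : a ∈ spanningSets μ n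
      · have h1 : Gn n a ≤ (n:ℝ≥0∞) * ν (spanningSets ν n) := by
          rw [hGn]
          dsimp only
          calc ∫⁻ b, Fn n a b ∂ν ≤ ∫⁻ b, (n:ℝ≥0∞) * (spanningSets ν n).indicator 1 b ∂ν := by
                apply lintegral_mono
                intro b
                rw [hFn]
                dsimp only
                calc min (F a b) (n:ℝ≥0∞) * (spanningSets μ n).indicator 1 a *
                      (spanningSets ν n).indicator 1 b
                    ≤ (n:ℝ≥0∞) * 1 * (spanningSets ν n).indicator 1 b :=
                      mul_le_mul' (mul_le_mul' (min_le_right _ _) (hindA _ _)) le_rfl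
                  _ = (n:ℝ≥0∞) * (spanningSets ν n).indicator 1 b := by ring
            _ = (n:ℝ≥0∞) * ν (spanningSets ν n) := by
                rw [lintegral_const_mul' _ _ (ENNReal.natCast_ne_top n),
                  lintegral_indicator_one (measurableSet_spanningSets ν n)]
        calc (Gn n a) ^ r ≤ ((n:ℝ≥0∞) * ν (spanningSets ν n)) ^ r :=
              ENNReal.rpow_le_rpow h1 hr0.le
          _ = (spanningSets μ n).indicator 1 a * ((n:ℝ≥0∞) * ν (spanningSets ν n)) ^ r := by
              simp [ha]
      · have h0 : Gn n a = 0 := by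
          rw [hGn]
          dsimp only
          rw [← lintegral_zero]
          congr 1
          funext b
          rw [hFn]
          simp [ha]
        rw [h0, ENNReal.zero_rpow_of_pos hr0]
        simp
    have : (∫⁻ a, (Gn n a) ^ r ∂μ) ≤ ∫⁻ a,
        (spanningSets μ n).indicator 1 a * ((n:ℝ≥0∞) * ν (spanningSets ν n)) ^ r ∂μ :=
      lintegral_mono hb
    rw [lintegral_mul_const' _ _ hc, lintegral_indicator_one (measurableSet_spanningSets μ n)]
      at this
    have h4 : Mn n ≤ μ (spanningSets μ n) * ((n:ℝ≥0∞) * ν (spanningSets ν n)) ^ r := this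
    intro htop
    rw [htop] at h4
    exact absurd h4 (by
      apply not_le.mpr
      exact ENNReal.mul_lt_top (measure_spanningSets_lt_top μ n) (lt_top_iff_ne_top.mpr hc))
  have hMn_le : ∀ n, Mn n ≤ RHS ^ r := by
    intro n
    have h1 := lintegral_lintegral_rpow_le_aux μ ν (hFnm n) hr (hMn_fin n)
    have h2 : (∫⁻ b, (∫⁻ a, (Fn n a b) ^ r ∂μ) ^ (1/r) ∂ν) ≤ RHS := by
      rw [hRHS]
      apply lintegral_mono
      intro b
      apply ENNReal.rpow_le_rpow _ (by positivity)
      exact lintegral_mono fun a => ENNReal.rpow_le_rpow (hFn_le n a b) hr0.le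
    have h3 : (Mn n) ^ (1/r) ≤ RHS := le_trans h1 h2
    calc Mn n = ((Mn n) ^ (1/r)) ^ r := by
          rw [← ENNReal.rpow_mul, one_div_mul_cancel hr0.ne', ENNReal.rpow_one]
      _ ≤ RHS ^ r := ENNReal.rpow_le_rpow h3 hr0.le
  rw [hM_sup]
  exact iSup_le hMn_le



lemma ae_nested {δ : Type*} [Fintype δ] [DecidableEq δ] {π : δ → Type*}
    [∀ i, MeasurableSpace (π i)] (μ : ∀ i, Measure (π i)) [∀ i, SigmaFinite (μ i)]
    (s t : Finset δ) (i : δ) (hi : i ∉ s ∪ t) (hcover : insert i (s ∪ t) = Finset.univ)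
    (hst : Disjoint s t) (hμi : μ i ≠ 0)
    (Q : (∀ j, π j) → Prop) (hQm : MeasurableSet {x | Q x})
    (hae : ∀ᵐ x ∂(Measure.pi μ), Q x)
    (hQi : ∀ z a, Q (Function.update z i a) → Q z) (z0 : ∀ j, π j) :
    ∀ᵐ y ∂(Measure.pi fun j : s => μ j), ∀ᵐ w ∂(Measure.pi fun j : t => μ j),
      Q (Function.updateFinset (Function.updateFinset z0 s y) t w) := by
  classical
  set g : (∀ j, π j) → ℝ≥0∞ := ({x | Q x}ᶜ).indicator 1 with hg
  have hgm : Measurable g := measurable_one.indicator hQm.compl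
  have hgQ : ∀ x, g x = 0 → Q x := by
    intro x hx
    by_contra hQx
    have : g x = 1 := by
      rw [hg]
      have : x ∈ {x | Q x}ᶜ := hQx
      simp [Set.indicator_of_mem this]
    rw [hx] at this
    exact one_ne_zero this.symm
  have h0 : ∫⁻ x, g x ∂(Measure.pi μ) = 0 := by
    rw [hg, lintegral_indicator_one hQm.compl]
    have := ae_iff.mp hae
    simpa [Set.compl_setOf] using this
  have h1 : (∫⋯∫⁻_Finset.univ, g ∂μ) z0 = 0 := by
    rw [← lintegral_eq_lmarginal_univ z0]
    exact h0
  have hsplit : (∫⋯∫⁻_Finset.univ, g ∂μ)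
      = ∫⋯∫⁻_s, (∫⋯∫⁻_t, (∫⋯∫⁻_({i} : Finset δ), g ∂μ) ∂μ) ∂μ := by
    have e1 : (Finset.univ : Finset δ) = (s ∪ t) ∪ ({i} : Finset δ) := by
      rw [← hcover, Finset.insert_eq, Finset.union_comm]
    rw [e1, lmarginal_union μ g hgm (Finset.disjoint_singleton_right.mpr hi),
      lmarginal_union μ _ (hgm.lmarginal μ) hst]
  rw [hsplit] at h1
  have hmti : Measurable (∫⋯∫⁻_t, (∫⋯∫⁻_({i} : Finset δ), g ∂μ) ∂μ) :=
    (hgm.lmarginal μ).lmarginal μ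
  have h2 : ∀ᵐ y ∂(Measure.pi fun j : s => μ j),
      (∫⋯∫⁻_t, (∫⋯∫⁻_({i} : Finset δ), g ∂μ) ∂μ) (updateFinset z0 s y) = 0 := by
    have := (lintegral_eq_zero_iff (hmti.comp measurable_updateFinset)).mp h1
    exact this
  filter_upwards [h2] with y hy
  have hmi : Measurable (∫⋯∫⁻_({i} : Finset δ), g ∂μ) := hgm.lmarginal μ
  have h3 : ∀ᵐ w ∂(Measure.pi fun j : t => μ j),
      (∫⋯∫⁻_({i} : Finset δ), g ∂μ) (updateFinset (updateFinset z0 s y) t w) = 0 := by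
    have := (lintegral_eq_zero_iff (hmi.comp measurable_updateFinset)).mp hy
    exact this
  filter_upwards [h3] with w hw
  set z := updateFinset (updateFinset z0 s y) t w with hz
  rw [lmarginal_singleton] at hw
  have h4 : ∀ᵐ a ∂(μ i), g (Function.update z i a) = 0 :=
    (lintegral_eq_zero_iff (hgm.comp (measurable_update z))).mp hw
  haveI : (ae (μ i)).NeBot := ae_neBot.mpr hμi
  obtain ⟨a, ha⟩ := h4.exists
  exact hQi z a (hgQ _ ha)



variable {δ : Type*} [DecidableEq δ] {π : δ → Type*} [∀ i, MeasurableSpace (π i)]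

/-- The partial operator: kernel applied in the coordinates of `s` only. -/
noncomputable def Tker (μ : ∀ i, Measure (π i)) (k : ∀ i, π i → π i → ℝ≥0∞)
    (f : (∀ i, π i) → ℝ≥0∞) (s : Finset δ) (x : ∀ i, π i) : ℝ≥0∞ :=
  (lmarginal μ s (fun y => f y * ∏ j ∈ s, k j (x j) (y j))) x

lemma measurable_updateFinset_pair (s : Finset δ) :
    Measurable (fun pr : (∀ i, π i) × (∀ j : s, π j) => updateFinset pr.1 s pr.2) := by
  classical
  rw [measurable_pi_iff]
  intro j
  by_cases hj : j ∈ s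
  · simpa [updateFinset, hj, Function.comp_def] using (measurable_pi_apply (⟨j, hj⟩ : s)).comp measurable_snd
  · simpa [updateFinset, hj, Function.comp_def] using (measurable_pi_apply j).comp measurable_fst

variable {μ : ∀ i, Measure (π i)} [∀ i, SigmaFinite (μ i)]
  {k : ∀ i, π i → π i → ℝ≥0∞} (hk : ∀ i, Measurable (Function.uncurry (k i)))
  {f : (∀ i, π i) → ℝ≥0∞} (hf : Measurable f)

include hk hf in
lemma Tker_meas (s : Finset δ) : Measurable (Tker μ k f s) := by
  classical
  have key : Measurable (fun pr : (∀ i, π i) × (∀ j : s, π j) =>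
      f (updateFinset pr.1 s pr.2) *
        ∏ j ∈ s, k j (pr.1 j) (updateFinset pr.1 s pr.2 j)) := by
    apply Measurable.mul
    · exact hf.comp (measurable_updateFinset_pair s)
    · apply Finset.measurable_prod
      intro j hj
      exact (hk j).comp
        (((measurable_pi_apply j).comp measurable_fst).prodMk
          ((measurable_pi_apply j).comp (measurable_updateFinset_pair s)))
  exact key.lintegral_prod_right'

lemma update_updateFinset_comm (x : ∀ i, π i) (t' : Finset δ) {i : δ}
    (hi : i ∉ t') (w : ∀ j : t', π j) (b : π i) :
    Function.update (updateFinset x t' w) i b = updateFinset (Function.update x i b) t' w := by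
  funext j
  rcases eq_or_ne j i with rfl | hj
  · have hjt : j ∉ t' := hi
    simp [updateFinset, hjt]
  · by_cases hjt : j ∈ t'
    · simp [updateFinset, hjt, Function.update_of_ne hj]
    · simp [updateFinset, hjt, Function.update_of_ne hj]

lemma updateFinset_apply_not_mem (x : ∀ i, π i) (t' : Finset δ) {i : δ}
    (hi : i ∉ t') (w : ∀ j : t', π j) : updateFinset x t' w i = x i := by
  simp [updateFinset, hi]

include hk hf in
/-- Key structural identity: peeling coordinate `i` off the partial operator. -/
lemma Tker_insert {t' : Finset δ} {i : δ} (hi : i ∉ t') (x : ∀ i, π i) :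
    Tker μ k f (insert i t') x
      = ∫⁻ b, Tker μ k f t' (Function.update x i b) * k i (x i) b ∂μ i := by
  classical
  have hmeas : Measurable (fun y => f y * ∏ j ∈ insert i t', k j (x j) (y j)) := by
    apply hf.mul
    apply Finset.measurable_prod
    intro j hj
    exact (hk j).comp (measurable_const.prodMk (measurable_pi_apply j))
  rw [Tker, lmarginal_insert _ hmeas hi x]
  congr 1
  funext b
  rw [lmarginal]
  have e : ∀ w : (∀ j : t', π j),
      f (updateFinset (Function.update x i b) t' w) *
          ∏ j ∈ insert i t', k j (x j) (updateFinset (Function.update x i b) t' w j)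
        = k i (x i) b * (f (updateFinset (Function.update x i b) t' w) *
            ∏ j ∈ t', k j ((Function.update x i b) j)
              (updateFinset (Function.update x i b) t' w j)) := by
    intro w
    rw [Finset.prod_insert hi]
    have e1 : updateFinset (Function.update x i b) t' w i = b := by
      rw [updateFinset_apply_not_mem _ _ hi, Function.update_self]
    have e2 : ∀ j ∈ t', k j (x j) (updateFinset (Function.update x i b) t' w j)
        = k j ((Function.update x i b) j) (updateFinset (Function.update x i b) t' w j) := by
      intro j hj
      have : j ≠ i := by rintro rfl; exact hi hj
      rw [Function.update_of_ne this]
    rw [Finset.prod_congr rfl e2, e1]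
    ring
  simp_rw [e]
  rw [lintegral_const_mul]
  · rw [Tker, lmarginal]
    ring
  · apply Measurable.mul
    · exact hf.comp measurable_updateFinset
    · apply Finset.measurable_prod
      intro j hj
      exact (hk j).comp (measurable_const.prodMk
        ((measurable_pi_apply j).comp measurable_updateFinset))


section Main

variable [Fintype δ]

/-- Inner quantity: `L^q` norm (to power `p`) of the partial operator over unprocessed
coordinates. -/
noncomputable def BB (μ : ∀ i, Measure (π i)) (k : ∀ i, π i → π i → ℝ≥0∞)
    (W : (∀ i, π i) → ℝ≥0∞) (p q : ℝ) (f : (∀ i, π i) → ℝ≥0∞) (s : Finset δ)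
    (x : ∀ i, π i) : ℝ≥0∞ :=
  ((lmarginal μ sᶜ (fun z => (Tker μ k f sᶜ z * W z) ^ q)) x) ^ (p/q)

/-- The interpolating mixed-norm quantity. -/
noncomputable def AA (μ : ∀ i, Measure (π i)) (k : ∀ i, π i → π i → ℝ≥0∞)
    (W : (∀ i, π i) → ℝ≥0∞) (p q : ℝ) (f : (∀ i, π i) → ℝ≥0∞) (z0 : ∀ i, π i)
    (s : Finset δ) : ℝ≥0∞ :=
  ((lmarginal μ s (BB μ k W p q f s)) z0) ^ (1/p)

variable {W : (∀ i, π i) → ℝ≥0∞} (hW : Measurable W) {p q : ℝ} {C : ℝ} {z0 : ∀ i, π i}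

include hk hf hW in
lemma BB_meas (s : Finset δ) : Measurable (BB μ k W p q f s) :=
  ((((Tker_meas hk hf sᶜ).mul hW).pow measurable_const).lmarginal μ).pow measurable_const

include hk hf hW in
lemma key_step (hp : 1 < p) (hpq : p < q) (s : Finset δ) (i : δ) (hi : i ∉ s)
    (hμi : μ i ≠ 0)
    (hsl : ∀ᵐ x ∂(Measure.pi μ), ∀ g : π i → ℝ≥0∞, Measurable g →
      (∫⁻ y, ((∫⁻ z, g z * k i y z ∂μ i) * W (Function.update x i y)) ^ q ∂μ i) ^ (1/q)
        ≤ ENNReal.ofReal C *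
          (∫⁻ y, (g y * W (Function.update x i y)) ^ p ∂μ i) ^ (1/p)) :
    AA μ k W p q f z0 s ≤ ENNReal.ofReal C * AA μ k W p q f z0 (insert i s) := by
  classical
  have hp0 : (0:ℝ) < p := by linarith
  have hq0 : (0:ℝ) < q := by linarith
  set t : Finset δ := sᶜ with hts
  set t' : Finset δ := (insert i s)ᶜ with ht's
  have hit' : i ∉ t' := by rw [ht's, Finset.compl_insert]; exact Finset.notMem_erase i _
  have htt' : insert i t' = t := by
    rw [ht's, hts, Finset.compl_insert]
    exact Finset.insert_erase (Finset.mem_compl.mpr hi)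
  set G : (∀ i, π i) → ℝ≥0∞ := fun z => (Tker μ k f t z * W z) ^ q with hGdef
  set H : (∀ i, π i) → ℝ≥0∞ := fun z => (Tker μ k f t' z * W z) ^ p with hHdef
  have hG : Measurable G := ((Tker_meas hk hf t).mul hW).pow measurable_const
  have hH : Measurable H := ((Tker_meas hk hf t').mul hW).pow measurable_const
  set Φq : (∀ i, π i) → ℝ≥0∞ := fun z => ∫⁻ a, G (Function.update z i a) ∂μ i with hΦdef
  set Ψp : (∀ i, π i) → ℝ≥0∞ := fun z => ∫⁻ b, H (Function.update z i b) ∂μ i with hΨdef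
  have hΦq : Measurable Φq :=
    Measurable.lintegral_prod_right' (hG.comp measurable_update')
  have hΨp : Measurable Ψp :=
    Measurable.lintegral_prod_right' (hH.comp measurable_update')
  have hCq_ne_top : (ENNReal.ofReal C) ^ q ≠ ∞ :=
    ENNReal.rpow_ne_top_of_nonneg hq0.le ENNReal.ofReal_ne_top
  have hCp_ne_top : (ENNReal.ofReal C) ^ p ≠ ∞ :=
    ENNReal.rpow_ne_top_of_nonneg hp0.le ENNReal.ofReal_ne_top
  -- a.e. slice inequality in the packaged form
  have hQae : ∀ᵐ z ∂(Measure.pi μ),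
      Φq z ≤ (ENNReal.ofReal C) ^ q * (Ψp z) ^ (q/p) := by
    filter_upwards [hsl] with x hx
    have hgm : Measurable fun b => Tker μ k f t' (Function.update x i b) :=
      (Tker_meas hk hf t').comp (measurable_update x)
    have h := hx _ hgm
    have hA : ∀ y, (∫⁻ z, Tker μ k f t' (Function.update x i z) * k i y z ∂μ i)
        = Tker μ k f t (Function.update x i y) := by
      intro y
      rw [← htt', Tker_insert hk hf hit' (Function.update x i y)]
      congr 1
      funext b
      rw [Function.update_idem, Function.update_self]
    simp_rw [hA] at h
    have h2 : ((Φq x) ^ (1/q)) ^ q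
        ≤ (ENNReal.ofReal C * ((Ψp x) ^ (1/p))) ^ q :=
      ENNReal.rpow_le_rpow h hq0.le
    rw [← ENNReal.rpow_mul, one_div_mul_cancel hq0.ne', ENNReal.rpow_one,
      ENNReal.mul_rpow_of_nonneg _ _ hq0.le, ← ENNReal.rpow_mul] at h2
    have e : 1/p * q = q/p := by field_simp
    rwa [e] at h2
  have hQm : MeasurableSet {z | Φq z ≤ (ENNReal.ofReal C) ^ q * (Ψp z) ^ (q/p)} :=
    measurableSet_le hΦq (measurable_const.mul (hΨp.pow measurable_const))
  have hQi : ∀ z a,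
      (fun z => Φq z ≤ (ENNReal.ofReal C) ^ q * (Ψp z) ^ (q/p)) (Function.update z i a) →
      (fun z => Φq z ≤ (ENNReal.ofReal C) ^ q * (Ψp z) ^ (q/p)) z := by
    intro z a hz
    have eΦ : Φq (Function.update z i a) = Φq z := by
      rw [hΦdef]
      simp_rw [Function.update_idem]
    have eΨ : Ψp (Function.update z i a) = Ψp z := by
      rw [hΨdef]
      simp_rw [Function.update_idem]
    rwa [eΦ, eΨ] at hz
  have hcov : insert i (s ∪ t') = Finset.univ := by
    rw [← Finset.insert_union, ht's]
    exact Finset.union_compl _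
  have hdisj : Disjoint s t' := by
    rw [ht's]
    exact Finset.disjoint_left.mpr fun a ha hat' =>
      (Finset.mem_compl.mp hat') (Finset.mem_insert_of_mem ha)
  have hiu : i ∉ s ∪ t' := by
    rw [Finset.mem_union]
    rintro (h | h)
    exacts [hi h, hit' h]
  have hAE := ae_nested μ s t' i hiu hcov hdisj hμi
    (fun z => Φq z ≤ (ENNReal.ofReal C) ^ q * (Ψp z) ^ (q/p)) hQm hQae hQi z0
  -- identify `BB s` with the `Φq` marginal
  have hBBs : BB μ k W p q f s = fun x => ((lmarginal μ t' Φq) x) ^ (p/q) := by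
    funext x
    rw [BB, ← hts, ← hGdef, ← htt', lmarginal_insert' _ hG hit']
  -- Step A: a.e. monotonicity
  have ineq1 : (lmarginal μ s (fun x => ((lmarginal μ t' Φq) x) ^ (p/q))) z0
      ≤ (lmarginal μ s (fun x =>
          ((ENNReal.ofReal C) ^ q *
            (lmarginal μ t' (fun z => (Ψp z) ^ (q/p))) x) ^ (p/q))) z0 := by
    simp only [lmarginal]
    apply lintegral_mono_ae
    filter_upwards [hAE] with y hy
    apply ENNReal.rpow_le_rpow _ (by positivity)
    rw [← lintegral_const_mul' _ _ hCq_ne_top]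
    apply lintegral_mono_ae
    filter_upwards [hy] with w hw
    exact hw
  -- Step B: Minkowski, pointwise
  have ineq2 : ∀ x, ((ENNReal.ofReal C) ^ q *
        (lmarginal μ t' (fun z => (Ψp z) ^ (q/p))) x) ^ (p/q)
      ≤ (ENNReal.ofReal C) ^ p *
        ∫⁻ b, BB μ k W p q f (insert i s) (Function.update x i b) ∂μ i := by
    intro x
    rw [ENNReal.mul_rpow_of_nonneg _ _ (by positivity), ← ENNReal.rpow_mul]
    have eC : q * (p/q) = p := by field_simp
    rw [eC]
    apply mul_le_mul' le_rfl
    have hr : 1 < q / p := (one_lt_div hp0).mpr hpq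
    have hF : Measurable (Function.uncurry
        (fun (w : ∀ j : t', π j) (b : π i) =>
          H (Function.update (updateFinset x t' w) i b))) :=
      hH.comp (measurable_update'.comp
        ((measurable_updateFinset.comp measurable_fst).prodMk measurable_snd))
    have hmink := lintegral_lintegral_rpow_le (Measure.pi fun j : t' => μ j) (μ i) hF hr
    have e1 : (lmarginal μ t' (fun z => (Ψp z) ^ (q/p))) x
        = ∫⁻ w, (∫⁻ b, H (Function.update (updateFinset x t' w) i b) ∂μ i) ^ (q/p)
            ∂(Measure.pi fun j : t' => μ j) := by
      rw [lmarginal]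
    have e2 : ∀ b, (∫⁻ w, (H (Function.update (updateFinset x t' w) i b)) ^ (q/p)
          ∂(Measure.pi fun j : t' => μ j))
        = lmarginal μ t' (fun z => H z ^ (q/p)) (Function.update x i b) := by
      intro b
      rw [lmarginal]
      congr 1
      funext w
      rw [update_updateFinset_comm x t' hit' w b]
    have e3 : (fun z => H z ^ (q/p)) = fun z => (Tker μ k f t' z * W z) ^ q := by
      funext z
      rw [hHdef, ← ENNReal.rpow_mul]
      congr 1
      field_simp
    have e4 : ∀ b, BB μ k W p q f (insert i s) (Function.update x i b)
        = (lmarginal μ t' (fun z => H z ^ (q/p)) (Function.update x i b)) ^ (p/q) := by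
      intro b
      rw [BB, ← ht's, e3]
    calc ((lmarginal μ t' (fun z => (Ψp z) ^ (q/p))) x) ^ (p/q)
        = (∫⁻ w, (∫⁻ b, H (Function.update (updateFinset x t' w) i b) ∂μ i) ^ (q/p)
            ∂(Measure.pi fun j : t' => μ j)) ^ (1/(q/p)) := by
          rw [e1, one_div_div]
      _ ≤ ∫⁻ b, (∫⁻ w, (H (Function.update (updateFinset x t' w) i b)) ^ (q/p)
            ∂(Measure.pi fun j : t' => μ j)) ^ (1/(q/p)) ∂μ i := hmink
      _ = ∫⁻ b, BB μ k W p q f (insert i s) (Function.update x i b) ∂μ i := by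
          congr 1
          funext b
          rw [e2 b, e4 b, one_div_div]
  -- Step C: reassemble
  have hBB' : Measurable (BB μ k W p q f (insert i s)) := BB_meas hk hf hW _
  have ineq3 : (lmarginal μ s (fun x =>
        ((ENNReal.ofReal C) ^ q *
          (lmarginal μ t' (fun z => (Ψp z) ^ (q/p))) x) ^ (p/q))) z0
      ≤ (lmarginal μ s (fun x => (ENNReal.ofReal C) ^ p *
          ∫⁻ b, BB μ k W p q f (insert i s) (Function.update x i b) ∂μ i)) z0 :=
    lmarginal_mono (fun x => ineq2 x) z0
  have e5 : (lmarginal μ s (fun x => (ENNReal.ofReal C) ^ p *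
        ∫⁻ b, BB μ k W p q f (insert i s) (Function.update x i b) ∂μ i)) z0
      = (ENNReal.ofReal C) ^ p * (lmarginal μ (insert i s)
          (BB μ k W p q f (insert i s))) z0 := by
    rw [lmarginal_insert' _ hBB' hi]
    simp only [lmarginal]
    rw [← lintegral_const_mul' _ _ hCp_ne_top]
  have main : (lmarginal μ s (BB μ k W p q f s)) z0
      ≤ (ENNReal.ofReal C) ^ p *
        (lmarginal μ (insert i s) (BB μ k W p q f (insert i s))) z0 := by
    rw [hBBs]
    exact le_trans ineq1 (le_trans ineq3 (le_of_eq e5))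
  -- conclude
  rw [AA, AA]
  calc ((lmarginal μ s (BB μ k W p q f s)) z0) ^ (1/p)
      ≤ ((ENNReal.ofReal C) ^ p *
          (lmarginal μ (insert i s) (BB μ k W p q f (insert i s))) z0) ^ (1/p) :=
        ENNReal.rpow_le_rpow main (by positivity)
    _ = ENNReal.ofReal C *
          ((lmarginal μ (insert i s) (BB μ k W p q f (insert i s))) z0) ^ (1/p) := by
        rw [ENNReal.mul_rpow_of_nonneg _ _ (by positivity), ← ENNReal.rpow_mul,
          mul_one_div_cancel hp0.ne', ENNReal.rpow_one]

 in
lemma AA_empty (hp0 : 0 < p) (hq0 : 0 < q) :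
    AA μ k W p q f z0 ∅
      = (∫⁻ x, ((∫⁻ y, f y * ∏ j, k j (x j) (y j) ∂Measure.pi μ) * W x) ^ q
          ∂Measure.pi μ) ^ (1/q) := by
  rw [AA, lmarginal_empty, BB, Finset.compl_empty, lmarginal_univ, ← ENNReal.rpow_mul]
  have e : p/q * (1/p) = 1/q := by field_simp
  rw [e]
  congr 1
  apply lintegral_congr
  intro x
  congr 2
  rw [Tker, lmarginal_univ]

include hk hf hW in
lemma AA_univ (hp0 : 0 < p) (hq0 : 0 < q) :
    AA μ k W p q f z0 Finset.univ
      = (∫⁻ x, (f x * W x) ^ p ∂Measure.pi μ) ^ (1/p) := by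
  rw [AA, lmarginal_univ]
  congr 1
  apply lintegral_congr
  intro x
  rw [BB, Finset.compl_univ, lmarginal_empty, Tker, lmarginal_empty]
  simp only [Finset.prod_empty, mul_one]
  rw [← ENNReal.rpow_mul]
  congr 1
  field_simp

include hk hf hW in
lemma AA_le (hp : 1 < p) (hpq : p < q) (hμ0 : ∀ i, μ i ≠ 0)
    (hsl : ∀ i, ∀ᵐ x ∂(Measure.pi μ), ∀ g : π i → ℝ≥0∞, Measurable g →
      (∫⁻ y, ((∫⁻ z, g z * k i y z ∂μ i) * W (Function.update x i y)) ^ q ∂μ i) ^ (1/q)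
        ≤ ENNReal.ofReal C *
          (∫⁻ y, (g y * W (Function.update x i y)) ^ p ∂μ i) ^ (1/p)) :
    ∀ (m : ℕ) (s : Finset δ), sᶜ.card = m →
      AA μ k W p q f z0 s
        ≤ (ENNReal.ofReal C) ^ m * AA μ k W p q f z0 Finset.univ := by
  intro m
  induction m with
  | zero =>
    intro s hs
    have hs' : s = Finset.univ := by
      have : sᶜ = ∅ := Finset.card_eq_zero.mp hs
      rwa [Finset.compl_eq_empty_iff] at this
    rw [hs']
    simp
  | succ m ih =>
    intro s hs
    have hne : sᶜ.Nonempty := Finset.card_pos.mp (by rw [hs]; exact Nat.succ_pos m)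
    obtain ⟨i, hi⟩ := hne
    have hi' : i ∉ s := Finset.mem_compl.mp hi
    have hcard : (insert i s)ᶜ.card = m := by
      rw [Finset.compl_insert, Finset.card_erase_of_mem hi, hs]
      omega
    calc AA μ k W p q f z0 s
        ≤ ENNReal.ofReal C * AA μ k W p q f z0 (insert i s) :=
          key_step hk hf hW hp hpq s i hi' (hμ0 i) (hsl i)
      _ ≤ ENNReal.ofReal C * ((ENNReal.ofReal C) ^ m * AA μ k W p q f z0 Finset.univ) :=
          mul_le_mul' le_rfl (ih _ hcard)
      _ = (ENNReal.ofReal C) ^ (m + 1) * AA μ k W p q f z0 Finset.univ := by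
          rw [pow_succ]
          ring


end Main

end OneWeightAux

end

open OneWeightAux Function

/-- One-weight iteration (Section 6): if `α_i/N_i = 1/p - 1/q` for every `i` and the
one-parameter weighted inequality holds uniformly in each coordinate slice, then the
strong fractional integral satisfies the one-weight inequality on the product space. -/
theorem one_weight_iteration
    (n : ℕ) (hn : 1 ≤ n) (N : Fin n → ℕ) (hN : ∀ i, 1 ≤ N i)
    (α : Fin n → ℝ) (hα : ∀ i, 0 < α i) (hαN : ∀ i, α i < (N i : ℝ))
    (p q : ℝ) (hp : 1 < p) (hpq : p < q)
    (hbal : ∀ i, α i / (N i : ℝ) = 1 / p - 1 / q)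
    (ω : (∀ i, EuclideanSpace ℝ (Fin (N i))) → ℝ)
    (hωm : Measurable ω) (hωpos : ∀ x, 0 < ω x)
    (C : ℝ) (hC : 0 < C)
    (hslice : ∀ i : Fin n,
      ∀ᵐ x : (∀ j, EuclideanSpace ℝ (Fin (N j))),
        ∀ f : EuclideanSpace ℝ (Fin (N i)) → ℝ≥0∞, Measurable f →
          (∫⁻ y : EuclideanSpace ℝ (Fin (N i)),
              ((∫⁻ z, f z * ENNReal.ofReal (‖y - z‖ ^ (α i - (N i : ℝ)))) *
                ENNReal.ofReal (ω (Function.update x i y))) ^ q) ^ (1 / q)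
            ≤ ENNReal.ofReal C *
              (∫⁻ y : EuclideanSpace ℝ (Fin (N i)),
                (f y * ENNReal.ofReal (ω (Function.update x i y))) ^ p) ^ (1 / p)) :
    ∃ C' : ℝ, 0 < C' ∧
      ∀ f : (∀ i, EuclideanSpace ℝ (Fin (N i))) → ℝ≥0∞, Measurable f →
        (∫⁻ x, ((∫⁻ y, f y *
              ∏ i, ENNReal.ofReal (‖x i - y i‖ ^ (α i - (N i : ℝ)))) *
            ENNReal.ofReal (ω x)) ^ q) ^ (1 / q)
          ≤ ENNReal.ofReal C' *
            (∫⁻ x, (f x * ENNReal.ofReal (ω x)) ^ p) ^ (1 / p) := by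
  classical
  refine ⟨C ^ n, pow_pos hC n, ?_⟩
  intro f hf
  set μ : ∀ i : Fin n, Measure (EuclideanSpace ℝ (Fin (N i))) := fun _ => volume with hμdef
  set k : ∀ i : Fin n, EuclideanSpace ℝ (Fin (N i)) → EuclideanSpace ℝ (Fin (N i)) → ℝ≥0∞ :=
    fun i a b => ENNReal.ofReal (‖a - b‖ ^ (α i - (N i : ℝ))) with hkdef
  set W : (∀ i, EuclideanSpace ℝ (Fin (N i))) → ℝ≥0∞ :=
    fun x => ENNReal.ofReal (ω x) with hWdef
  have hk : ∀ i, Measurable (Function.uncurry (k i)) := by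
    intro i
    exact ENNReal.measurable_ofReal.comp
      (((measurable_fst.sub measurable_snd).norm).pow measurable_const)
  have hW : Measurable W := ENNReal.measurable_ofReal.comp hωm
  have hμ0 : ∀ i, μ i ≠ 0 := by
    intro i
    exact Measure.measure_univ_pos.mp
      (isOpen_univ.measure_pos volume ⟨0, trivial⟩)
  set z0 : ∀ i, EuclideanSpace ℝ (Fin (N i)) := fun _ => 0 with hz0
  have hp0 : (0:ℝ) < p := by linarith
  have hq0 : (0:ℝ) < q := by linarith
  have hsl : ∀ i : Fin n, ∀ᵐ x ∂(Measure.pi μ), ∀ g : EuclideanSpace ℝ (Fin (N i)) → ℝ≥0∞,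
      Measurable g →
      (∫⁻ y, ((∫⁻ z, g z * k i y z ∂μ i) * W (Function.update x i y)) ^ q ∂μ i) ^ (1/q)
        ≤ ENNReal.ofReal C *
          (∫⁻ y, (g y * W (Function.update x i y)) ^ p ∂μ i) ^ (1/p) := by
    intro i
    have h := hslice i
    rw [MeasureTheory.volume_pi] at h
    exact h
  have hmain := AA_le (z0 := z0) hk hf hW hp hpq hμ0 hsl n ∅ (by simp)
  rw [AA_empty hk hf hW hp0 hq0, AA_univ hk hf hW hp0 hq0] at hmain
  have hC' : ENNReal.ofReal (C ^ n) = (ENNReal.ofReal C) ^ n := ENNReal.ofReal_pow hC.le n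
  rw [hC']
  calc (∫⁻ x, ((∫⁻ y, f y *
            ∏ i, ENNReal.ofReal (‖x i - y i‖ ^ (α i - (N i : ℝ)))) *
          ENNReal.ofReal (ω x)) ^ q) ^ (1 / q)
      = (∫⁻ x, ((∫⁻ y, f y * ∏ j, k j (x j) (y j) ∂Measure.pi μ) * W x) ^ q
          ∂Measure.pi μ) ^ (1/q) := by
        rw [MeasureTheory.volume_pi]
    _ ≤ (ENNReal.ofReal C) ^ n * (∫⁻ x, (f x * W x) ^ p ∂Measure.pi μ) ^ (1/p) := hmain
    _ = (ENNReal.ofReal C) ^ n * (∫⁻ x, (f x * ENNReal.ofReal (ω x)) ^ p) ^ (1 / p) := by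
        rw [MeasureTheory.volume_pi]
end
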